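/- Let z = (z_0,z_1,z_2,z_3) = (3−√3, (1+i)√3, (1−i)√3, −i(3−√3)) ∈ ℂ⁴. Then F_1(z) = 0, F_3(z) = 0, F_4(z) = 0, and F_6(z) ≠ 0. -/
import Mathlib

set_option linter.unnecessarySeqFocus false
open Complex

/-- `F_k(z) = (1/6) Σ_{0 ≤ i < j ≤ 3} [(z_i - z_j)^{2k} + (z_i + z_j)^{2k}]`. -/
noncomputable def Fval (k : ℕ) (z : Fin 4 → ℂ) : ℂ :=
  (6⁻¹ : ℂ) * ∑ i : Fin 4, ∑ j : Fin 4,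
    if i < j then (z i - z j) ^ (2 * k) + (z i + z j) ^ (2 * k) else 0

/-- The point `z = (3-√3, (1+i)√3, (1-i)√3, -i(3-√3))`. -/
noncomputable def zF : Fin 4 → ℂ :=
  ![3 - (Real.sqrt 3 : ℝ), (1 + I) * (Real.sqrt 3 : ℝ),
    (1 - I) * (Real.sqrt 3 : ℝ), -I * (3 - (Real.sqrt 3 : ℝ))]

lemma Fval1_eq : Fval 1 zF = 0 := by
  have ht : ((Real.sqrt 3 : ℝ) : ℂ)^2 = 3 := by
    norm_cast; rw [Real.sq_sqrt] <;> norm_num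
  have hI : (Complex.I)^2 = -1 := Complex.I_sq
  set s : ℂ := ((Real.sqrt 3 : ℝ) : ℂ) with hs
  simp (config := { decide := true }) only [Fval, zF, Fin.sum_univ_four,
    Matrix.cons_val_zero, Matrix.cons_val_one, Matrix.head_cons,
    Matrix.cons_val_two, Matrix.tail_cons, Matrix.cons_val_three,
    if_true, if_false]
  linear_combination ((0:ℂ)) * ht + ((9:ℂ) + (-6:ℂ)*s^1 + (3:ℂ)*s^2) * hI

lemma Fval3_eq : Fval 3 zF = 0 := by
  have ht : ((Real.sqrt 3 : ℝ) : ℂ)^2 = 3 := by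
    norm_cast; rw [Real.sq_sqrt] <;> norm_num
  have hI : (Complex.I)^2 = -1 := Complex.I_sq
  set s : ℂ := ((Real.sqrt 3 : ℝ) : ℂ) with hs
  simp (config := { decide := true }) only [Fval, zF, Fin.sum_univ_four,
    Matrix.cons_val_zero, Matrix.cons_val_one, Matrix.head_cons,
    Matrix.cons_val_two, Matrix.tail_cons, Matrix.cons_val_three,
    if_true, if_false]
  linear_combination ((0:ℂ)) * ht + ((729:ℂ) + (2916:ℂ)*Complex.I^2 + (729:ℂ)*Complex.I^4 + (-1458:ℂ)*s^1 + (-5832:ℂ)*s^1*Complex.I^2 + (-1458:ℂ)*s^1*Complex.I^4 + (2025:ℂ)*s^2 + (4860:ℂ)*s^2*Complex.I^2 + (2025:ℂ)*s^2*Complex.I^4 + (-1620:ℂ)*s^3 + (-2160:ℂ)*s^3*Complex.I^2 + (-1620:ℂ)*s^3*Complex.I^4 + (765:ℂ)*s^4 + (1080:ℂ)*s^4*Complex.I^2 + (765:ℂ)*s^4*Complex.I^4 + (-198:ℂ)*s^5 + (-432:ℂ)*s^5*Complex.I^2 + (-198:ℂ)*s^5*Complex.I^4 + (33:ℂ)*s^6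 + (72:ℂ)*s^6*Complex.I^2 + (33:ℂ)*s^6*Complex.I^4) * hI

lemma Fval4_eq : Fval 4 zF = 0 := by
  have ht : ((Real.sqrt 3 : ℝ) : ℂ)^2 = 3 := by
    norm_cast; rw [Real.sq_sqrt] <;> norm_num
  have hI : (Complex.I)^2 = -1 := Complex.I_sq
  set s : ℂ := ((Real.sqrt 3 : ℝ) : ℂ) with hs
  simp (config := { decide := true }) only [Fval, zF, Fin.sum_univ_four,
    Matrix.cons_val_zero, Matrix.cons_val_one, Matrix.head_cons,
    Matrix.cons_val_two, Matrix.tail_cons, Matrix.cons_val_three,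
    if_true, if_false]
  linear_combination ((-14580:ℂ) + (38880:ℂ)*s^1 + (-50220:ℂ)*s^2 + (43200:ℂ)*s^3 + (-19260:ℂ)*s^4 + (4320:ℂ)*s^5 + (-260:ℂ)*s^6) * ht + ((-37179:ℂ) + (98415:ℂ)*Complex.I^2 + (54675:ℂ)*Complex.I^4 + (6561:ℂ)*Complex.I^6 + (99144:ℂ)*s^1 + (-262440:ℂ)*s^1*Complex.I^2 + (-145800:ℂ)*s^1*Complex.I^4 + (-17496:ℂ)*s^1*Complex.I^6 + (-102060:ℂ)*s^2 + (306180:ℂ)*s^2*Complex.I^2 + (170100:ℂ)*s^2*Complex.I^4 + (34020:ℂ)*s^2*Complex.I^6 + (49896:ℂ)*s^3 + (-204120:ℂ)*s^3*Complex.I^2 + (-113400:ℂ)*s^3*Complex.I^4 + (-40824:ℂ)*s^3*Complex.I^6 + (24570:ℂ)*s^4 + (73710:ℂ)*s^4*Complex.I^2 + (66150:ℂ)*s^4*Complex.I^4 + (32130:ℂ)*s^4*Complex.I^6 + (-46872:ℂ)*s^5 + (-7560:ℂ)*s^5*Complex.I^2 + (-37800:ℂ)*s^5*Complex.I^4 +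 (-16632:ℂ)*s^5*Complex.I^6 + (23940:ℂ)*s^6 + (-1260:ℂ)*s^6*Complex.I^2 + (17220:ℂ)*s^6*Complex.I^4 + (5460:ℂ)*s^6*Complex.I^6 + (-5352:ℂ)*s^7 + (-360:ℂ)*s^7*Complex.I^2 + (-4680:ℂ)*s^7*Complex.I^4 + (-1032:ℂ)*s^7*Complex.I^6 + (389:ℂ)*s^8 + (255:ℂ)*s^8*Complex.I^2 + (515:ℂ)*s^8*Complex.I^4 + (129:ℂ)*s^8*Complex.I^6) * hI

lemma Fval6_eq : Fval 6 zF = -4031078400 + 2329067520 * ((Real.sqrt 3 : ℝ) : ℂ) := by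
  have ht : ((Real.sqrt 3 : ℝ) : ℂ)^2 = 3 := by
    norm_cast; rw [Real.sq_sqrt] <;> norm_num
  have hI : (Complex.I)^2 = -1 := Complex.I_sq
  set s : ℂ := ((Real.sqrt 3 : ℝ) : ℂ) with hs
  simp (config := { decide := true }) only [Fval, zF, Fin.sum_univ_four,
    Matrix.cons_val_zero, Matrix.cons_val_one, Matrix.head_cons,
    Matrix.cons_val_two, Matrix.tail_cons, Matrix.cons_val_three,
    if_true, if_false]
  linear_combination ((-1340149860:ℂ) + (762184080:ℂ)*s^1 + (-420735060:ℂ)*s^2 + (225192960:ℂ)*s^3 + (-112820040:ℂ)*s^4 + (48120480:ℂ)*s^5 + (-15153480:ℂ)*s^6 + (2782080:ℂ)*s^7 + (-79380:ℂ)*s^8 + (-62640:ℂ)*s^9 + (9180:ℂ)*s^10) * ht + ((11160261:ℂ) + (531441:ℂ)*Complex.I^2 + (87156324:ℂ)*Complex.I^4 + (76527504:ℂ)*Complex.I^6 + (11160261:ℂ)*Complex.I^8 + (531441:ℂ)*Complex.I^10 + (-44641044:ℂ)*s^1 + (-2125764:ℂ)*s^1*Complex.I^2 + (-348625296:ℂ)*s^1*Complex.I^4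 + (-306110016:ℂ)*s^1*Complex.I^6 + (-44641044:ℂ)*s^1*Complex.I^8 + (-2125764:ℂ)*s^1*Complex.I^10 + (84440070:ℂ)*s^2 + (3897234:ℂ)*s^2*Complex.I^2 + (639146376:ℂ)*s^2*Complex.I^4 + (561201696:ℂ)*s^2*Complex.I^6 + (81841914:ℂ)*s^2*Complex.I^8 + (6495390:ℂ)*s^2*Complex.I^10 + (-99595980:ℂ)*s^3 + (-4330260:ℂ)*s^3*Complex.I^2 + (-710162640:ℂ)*s^3*Complex.I^4 + (-623557440:ℂ)*s^3*Complex.I^6 + (-90935460:ℂ)*s^3*Complex.I^8 + (-12990780:ℂ)*s^3*Complex.I^10 + (100678545:ℂ)*s^4 + (-3247695:ℂ)*s^4*Complex.I^2 + (541282500:ℂ)*s^4*Complex.I^4 + (459007560:ℂ)*s^4*Complex.I^6 + (79027245:ℂ)*s^4*Complex.I^8 + (18403605:ℂ)*s^4*Complex.I^10 + (-99884664:ℂ)*s^5 + (15588936:ℂ)*s^5*Complex.I^2 + (-307159776:ℂ)*s^5*Complex.I^4 + (-226328256:ℂ)*s^5*Complex.I^6 + (-65242584:ℂ)*s^5*Complex.I^8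 + (-19053144:ℂ)*s^5*Complex.I^10 + (81954180:ℂ)*s^6 + (-13247388:ℂ)*s^6*Complex.I^2 + (137862648:ℂ)*s^6*Complex.I^4 + (70503048:ℂ)*s^6*Complex.I^6 + (54112212:ℂ)*s^6*Complex.I^8 + (14594580:ℂ)*s^6*Complex.I^10 + (-48049848:ℂ)*s^7 + (705672:ℂ)*s^7*Complex.I^2 + (-50423472:ℂ)*s^7*Complex.I^4 + (-10649232:ℂ)*s^7*Complex.I^6 + (-39068568:ℂ)*s^7*Complex.I^8 + (-8275608:ℂ)*s^7*Complex.I^10 + (18350145:ℂ)*s^8 + (6482025:ℂ)*s^8*Complex.I^2 + (15129180:ℂ)*s^8*Complex.I^4 + (213840:ℂ)*s^8*Complex.I^6 + (21397365:ℂ)*s^8*Complex.I^8 + (3434805:ℂ)*s^8*Complex.I^10 + (-3985740:ℂ)*s^9 + (-5268780:ℂ)*s^9*Complex.I^2 + (-3730320:ℂ)*s^9*Complex.I^4 + (-760320:ℂ)*s^9*Complex.I^6 + (-8238780:ℂ)*s^9*Complex.I^8 + (-1015740:ℂ)*s^9*Complex.I^10 + (309870:ℂ)*s^10 + (1984554:ℂ)*s^10*Complex.I^2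 + (810216:ℂ)*s^10*Complex.I^4 + (703296:ℂ)*s^10*Complex.I^6 + (2091474:ℂ)*s^10*Complex.I^8 + (202950:ℂ)*s^10*Complex.I^10 + (38052:ℂ)*s^11 + (-377028:ℂ)*s^11*Complex.I^2 + (-151632:ℂ)*s^11*Complex.I^4 + (-214272:ℂ)*s^11*Complex.I^6 + (-314388:ℂ)*s^11*Complex.I^8 + (-24588:ℂ)*s^11*Complex.I^10 + (-7131:ℂ)*s^12 + (29769:ℂ)*s^12*Complex.I^2 + (15276:ℂ)*s^12*Complex.I^4 + (24456:ℂ)*s^12*Complex.I^6 + (20589:ℂ)*s^12*Complex.I^8 + (2049:ℂ)*s^12*Complex.I^10) * hI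

lemma Fval6_ne : Fval 6 zF ≠ 0 := by
  rw [Fval6_eq]
  intro h
  have hr : (-4031078400 + 2329067520 * Real.sqrt 3 : ℝ) = 0 := by
    have := congrArg Complex.re h
    simpa using this
  have h3 : Real.sqrt 3 ^ 2 = 3 := Real.sq_sqrt (by norm_num)
  have hpos : (0:ℝ) ≤ Real.sqrt 3 := Real.sqrt_nonneg 3
  nlinarith [h3, hpos, hr]

/-- At `z = (3-√3, (1+i)√3, (1-i)√3, -i(3-√3))` one has `F₁(z) = F₃(z) = F₄(z) = 0`
while `F₆(z) ≠ 0`. -/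
theorem Fval_at_special_state :
    Fval 1 zF = 0 ∧ Fval 3 zF = 0 ∧ Fval 4 zF = 0 ∧ Fval 6 zF ≠ 0 := by
  exact ⟨Fval1_eq, Fval3_eq, Fval4_eq, Fval6_ne⟩
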